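/- Let $X$ be a compact metric space, $T$ a correspondence on $X$, $Y \subset X$ closed, and $f: Y \to Y$ continuous with $T(x) \cap Y = \{f(x)\}$ for all $x \in Y$. If $\mu$ is an ergodic $f$-invariant Borel probability measure on $Y$ (an extreme point of $\mathcal{P}_f(Y)$), then the extension $\hat\mu(A) := \mu(A \cap Y)$ is an extreme point of the set $\mathcal{P}_T(X)$ of $T$-invariant Borel probability measures on $X$. -/

import Mathlib

open MeasureTheory ENNReal

/-- If `T x ∩ Y = {f x}` on a closed subset `Y` with `f : Y → Y` continuous, and
`μ` is an extreme point of the set of `f`-invariant Borel probability measures on `Y`, then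
its extension `μ̂ (A) = μ (A ∩ Y)` is an extreme point of the set `𝒫_T(X)` of `T`-invariant
Borel probability measures on `X`. -/
theorem stmt12 {X : Type*} [MetricSpace X] [CompactSpace X] [MeasurableSpace X] [BorelSpace X]
    (T : X → Set X) (hval : ∀ x, (T x).Nonempty ∧ IsClosed (T x))
    (hgraph : IsClosed {p : X × X | p.2 ∈ T p.1})
    (Y : Set X) (hY : IsClosed Y) (f : Y → Y) (hf : Continuous f)
    (hTY : ∀ x : Y, T ↑x ∩ Y = {((f x : Y) : X)})
    (μ : Measure Y) [IsProbabilityMeasure μ] (hinv : μ.map f = μ)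
    (hext : ∀ m₁ m₂ : Measure Y,
      (IsProbabilityMeasure m₁ ∧ m₁.map f = m₁) →
      (IsProbabilityMeasure m₂ ∧ m₂.map f = m₂) →
      ∀ p : ℝ≥0∞, 0 < p → p < 1 → μ = p • m₁ + (1 - p) • m₂ → m₁ = m₂) :
    (IsProbabilityMeasure (μ.map (Subtype.val : Y → X)) ∧
      ∀ A : Set X, MeasurableSet A →
        (μ.map (Subtype.val : Y → X)) A ≤
          (μ.map (Subtype.val : Y → X)) {x : X | (T x ∩ A).Nonempty}) ∧
    ∀ m₁ m₂ : Measure X,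
      (IsProbabilityMeasure m₁ ∧
        ∀ A : Set X, MeasurableSet A → m₁ A ≤ m₁ {x : X | (T x ∩ A).Nonempty}) →
      (IsProbabilityMeasure m₂ ∧
        ∀ A : Set X, MeasurableSet A → m₂ A ≤ m₂ {x : X | (T x ∩ A).Nonempty}) →
      ∀ p : ℝ≥0∞, 0 < p → p < 1 →
        μ.map (Subtype.val : Y → X) = p • m₁ + (1 - p) • m₂ → m₁ = m₂ := by
  have hYm : MeasurableSet Y := hY.measurableSet
  have hemb : MeasurableEmbedding (Subtype.val : Y → X) :=
    MeasurableEmbedding.subtype_coe hYm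
  have hfm : Measurable f := hf.measurable
  -- The key set identity: for `y : Y`, `f y ∈ T y`.
  have hfT : ∀ y : Y, ((f y : Y) : X) ∈ T (y : X) := by
    intro y
    have h : ((f y : Y) : X) ∈ T (y : X) ∩ Y := by
      rw [hTY y]; exact rfl
    exact h.1
  constructor
  · refine ⟨Measure.isProbabilityMeasure_map hemb.measurable.aemeasurable, ?_⟩
    intro A hA
    rw [hemb.map_apply, hemb.map_apply]
    have hsub : f ⁻¹' (Subtype.val ⁻¹' A) ⊆
        (Subtype.val : Y → X) ⁻¹' {x | (T x ∩ A).Nonempty} := by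
      intro y hy
      exact ⟨((f y : Y) : X), hfT y, hy⟩
    calc μ (Subtype.val ⁻¹' A) = (μ.map f) (Subtype.val ⁻¹' A) := by rw [hinv]
      _ = μ (f ⁻¹' (Subtype.val ⁻¹' A)) := Measure.map_apply hfm (hemb.measurable hA)
      _ ≤ μ ((Subtype.val : Y → X) ⁻¹' {x | (T x ∩ A).Nonempty}) := measure_mono hsub
  · rintro m₁ m₂ ⟨hp₁, hT₁⟩ ⟨hp₂, hT₂⟩ p hp0 hp1 hdecomp
    have hp1' : (1 : ℝ≥0∞) - p ≠ 0 := by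
      simpa [tsub_eq_zero_iff_le] using not_le.mpr hp1
    -- both m₁ and m₂ give full measure to Y
    have hYc : (μ.map (Subtype.val : Y → X)) Yᶜ = 0 := by
      rw [hemb.map_apply]
      have : (Subtype.val : Y → X) ⁻¹' Yᶜ = ∅ := by
        ext y; simp [y.2]
      rw [this]; exact measure_empty
    have hsum : p * m₁ Yᶜ + (1 - p) * m₂ Yᶜ = 0 := by
      have := hdecomp ▸ hYc
      simpa [Measure.add_apply, Measure.smul_apply, smul_eq_mul] using this
    have hm₁Yc : m₁ Yᶜ = 0 := by
      have h := add_eq_zero.mp hsum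
      rcases mul_eq_zero.mp h.1 with h' | h'
      · exact absurd h' hp0.ne'
      · exact h'
    have hm₂Yc : m₂ Yᶜ = 0 := by
      have h := add_eq_zero.mp hsum
      rcases mul_eq_zero.mp h.2 with h' | h'
      · exact absurd h' hp1'
      · exact h'
    -- restrict m₁, m₂ to Y
    set ν₁ : Measure Y := m₁.comap Subtype.val with hν₁
    set ν₂ : Measure Y := m₂.comap Subtype.val with hν₂
    have hmap₁ : ν₁.map Subtype.val = m₁ := by
      rw [hν₁, hemb.map_comap, Subtype.range_coe,
        Measure.restrict_eq_self_of_ae_mem]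
      exact (MeasureTheory.ae_iff.mpr (by exact hm₁Yc))
    have hmap₂ : ν₂.map Subtype.val = m₂ := by
      rw [hν₂, hemb.map_comap, Subtype.range_coe,
        Measure.restrict_eq_self_of_ae_mem]
      exact (MeasureTheory.ae_iff.mpr (by exact hm₂Yc))
    have hmY : ∀ (m : Measure X), IsProbabilityMeasure m → m Yᶜ = 0 → m Y = 1 := by
      intro m hm hmc
      have h := measure_add_measure_compl (μ := m) hYm
      rw [hmc, add_zero, measure_univ] at h
      exact h
    have hprob₁ : IsProbabilityMeasure ν₁ := by
      constructor
      rw [hν₁, hemb.comap_apply, Set.image_univ, Subtype.range_coe]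
      exact hmY m₁ hp₁ hm₁Yc
    have hprob₂ : IsProbabilityMeasure ν₂ := by
      constructor
      rw [hν₂, hemb.comap_apply, Set.image_univ, Subtype.range_coe]
      exact hmY m₂ hp₂ hm₂Yc
    -- the key invariance inequality on Y
    have hkey : ∀ (m : Measure X), m Yᶜ = 0 →
        (∀ A : Set X, MeasurableSet A → m A ≤ m {x : X | (T x ∩ A).Nonempty}) →
        ∀ B : Set Y, MeasurableSet B →
          (m.comap Subtype.val) B ≤ (m.comap Subtype.val) (f ⁻¹' B) := by
      intro m hmc hTm B hB
      rw [hemb.comap_apply, hemb.comap_apply]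
      set A : Set X := Subtype.val '' B with hA
      have hAm : MeasurableSet A := hemb.measurableSet_image.mpr hB
      have hAY : A ⊆ Y := by rintro x ⟨y, _, rfl⟩; exact y.2
      -- T⁻¹ A ∩ Y = val '' (f⁻¹ B)
      have hset : {x : X | (T x ∩ A).Nonempty} ∩ Y = Subtype.val '' (f ⁻¹' B) := by
        ext x
        constructor
        · rintro ⟨⟨z, hzT, hzA⟩, hxY⟩
          have hz : z ∈ T x ∩ Y := ⟨hzT, hAY hzA⟩
          rw [hTY ⟨x, hxY⟩] at hz
          rw [hz] at hzA
          obtain ⟨y, hyB, hy⟩ := hzA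
          have : y = f ⟨x, hxY⟩ := Subtype.val_injective hy
          exact ⟨⟨x, hxY⟩, by rw [Set.mem_preimage, ← this]; exact hyB, rfl⟩
        · rintro ⟨y, hyB, rfl⟩
          exact ⟨⟨((f y : Y) : X), hfT y, ⟨f y, hyB, rfl⟩⟩, y.2⟩
      calc m A ≤ m {x : X | (T x ∩ A).Nonempty} := hTm A hAm
        _ ≤ m ({x : X | (T x ∩ A).Nonempty} ∩ Y) + m Yᶜ :=
            measure_mono (fun x hx => by
              by_cases hxY : x ∈ Y
              · exact Set.mem_union_left _ ⟨hx, hxY⟩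
              · exact Set.mem_union_right _ hxY) |>.trans (measure_union_le _ _)
        _ = m (Subtype.val '' (f ⁻¹' B)) := by rw [hmc, add_zero, hset]
    -- upgrade to equality: ν is f-invariant
    have hinvν : ∀ (ν : Measure Y), IsProbabilityMeasure ν →
        (∀ B : Set Y, MeasurableSet B → ν B ≤ ν (f ⁻¹' B)) → ν.map f = ν := by
      intro ν hν hle
      haveI := hν
      refine Measure.ext fun B hB => ?_
      rw [Measure.map_apply hfm hB]
      refine le_antisymm ?_ (hle B hB)
      have h1 : ν (f ⁻¹' B) + ν (f ⁻¹' B)ᶜ = 1 := by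
        rw [measure_add_measure_compl (hfm hB), measure_univ]
      have h2 : ν B + ν Bᶜ = 1 := by
        rw [measure_add_measure_compl hB, measure_univ]
      have h3 : ν Bᶜ ≤ ν (f ⁻¹' B)ᶜ := by
        have := hle Bᶜ hB.compl
        rwa [Set.preimage_compl] at this
      have h4 : ν (f ⁻¹' B) + ν Bᶜ ≤ ν B + ν Bᶜ := by
        calc ν (f ⁻¹' B) + ν Bᶜ ≤ ν (f ⁻¹' B) + ν (f ⁻¹' B)ᶜ := add_le_add_right h3 _
          _ = ν B + ν Bᶜ := by rw [h1, h2]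
      exact (ENNReal.add_le_add_iff_right (measure_ne_top ν Bᶜ)).mp h4
    have hinv₁ : ν₁.map f = ν₁ := hinvν ν₁ hprob₁ (hkey m₁ hm₁Yc hT₁)
    have hinv₂ : ν₂.map f = ν₂ := hinvν ν₂ hprob₂ (hkey m₂ hm₂Yc hT₂)
    -- the convex decomposition descends to Y
    have hdec : μ = p • ν₁ + (1 - p) • ν₂ := by
      refine Measure.ext fun B hB => ?_
      have hAm : MeasurableSet (Subtype.val '' B) := hemb.measurableSet_image.mpr hB
      have h1 : μ B = (μ.map Subtype.val) (Subtype.val '' B) := by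
        rw [hemb.map_apply, Subtype.val_injective.preimage_image]
      rw [h1, hdecomp]
      simp only [Measure.add_apply, Measure.smul_apply, smul_eq_mul,
        hν₁, hν₂, hemb.comap_apply]
    have hνeq : ν₁ = ν₂ := hext ν₁ ν₂ ⟨hprob₁, hinv₁⟩ ⟨hprob₂, hinv₂⟩ p hp0 hp1 hdec
    rw [← hmap₁, ← hmap₂, hνeq]
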